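/- Let ⟨V, ≤⟩ be a pre-ordered vector space with an order unit e. Let U be a linear subspace of V containing e, let L be a positive linear functional on U, let p ∈ V ∖ U, and let γ ∈ ℝ satisfy d_p^L ≤ γ ≤ u_p^L. Then there is a positive linear functional L' defined on span({p} ∪ U) that extends L and satisfies L'(p) = γ. -/

import Mathlib

/-- **Lemma (one-step extension of positive functionals).** In a pre-ordered real
vector space `⟨V, le⟩` with order unit `e`, let `U` be a subspace containing `e`,
`L` a positive linear functional on `U`, `p ∉ U`, and `γ` with
`d_p^L ≤ γ ≤ u_p^L`.  Then `L` extends to a positive linear functional `L'` on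
`span({p} ∪ U)` with `L'(p) = γ`. -/
theorem statement11 (V : Type*) [AddCommGroup V] [Module ℝ V]
    (le : V → V → Prop)
    (hrefl : ∀ v, le v v)
    (htrans : ∀ a b c, le a b → le b c → le a c)
    (hadd : ∀ p₁ q₁ p₂ q₂, le p₁ q₁ → le p₂ q₂ → le (p₁ + p₂) (q₁ + q₂))
    (hsmul : ∀ a : ℝ, 0 ≤ a → ∀ p q, le p q → le (a • p) (a • q))
    (e : V) (hunit : ∀ p : V, ∃ r : ℝ, 0 ≤ r ∧ le p (r • e))
    (U : Submodule ℝ V) (heU : e ∈ U)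
    (L : U →ₗ[ℝ] ℝ) (hL : ∀ u : U, le 0 (u : V) → 0 ≤ L u)
    (p : V) (hp : p ∉ U) (γ : ℝ)
    (hγ₁ : sSup {x : ℝ | ∃ v : U, le (v : V) p ∧ L v = x} ≤ γ)
    (hγ₂ : γ ≤ sInf {x : ℝ | ∃ v : U, le p (v : V) ∧ L v = x}) :
    ∃ L' : Submodule.span ℝ (insert p (U : Set V)) →ₗ[ℝ] ℝ,
      (∀ u : Submodule.span ℝ (insert p (U : Set V)), le 0 (u : V) → 0 ≤ L' u) ∧
      (∀ u : U, L' ⟨(u : V), Submodule.subset_span (Set.mem_insert_of_mem p u.2)⟩ = L u) ∧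
      L' ⟨p, Submodule.subset_span (Set.mem_insert p (U : Set V))⟩ = γ := by
  -- basic order facts
  have htrans' : ∀ a b c : V, le a b → le (a + c) (b + c) := fun a b c h =>
    hadd a b c c h (hrefl c)
  have hmono : ∀ v w : U, le (v : V) (w : V) → L v ≤ L w := by
    intro v w h
    have h0 : le 0 ((w - v : U) : V) := by
      have := htrans' _ _ (-(v : V)) h
      simpa [sub_eq_add_neg, add_neg_cancel] using this
    have := hL _ h0
    simp only [map_sub] at this
    linarith
  -- the down-set and up-set are nonempty
  obtain ⟨r, hr0, hre⟩ := hunit p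
  obtain ⟨s, hs0, hse⟩ := hunit (-p)
  have hup : le p ((r • e : V)) := hre
  have hdown : le (-(s • e) : V) p := by
    have h := htrans' _ _ (p - s • e) hse
    have e1 : -p + (p - s • e) = -(s • e) := by abel
    have e2 : s • e + (p - s • e) = p := by abel
    rwa [e1, e2] at h
  set Sd : Set ℝ := {x : ℝ | ∃ v : U, le (v : V) p ∧ L v = x} with hSd
  set Su : Set ℝ := {x : ℝ | ∃ v : U, le p (v : V) ∧ L v = x} with hSu
  have hreU : (r • e) ∈ U := U.smul_mem r heU
  have hseU : (-(s • e)) ∈ U := U.neg_mem (U.smul_mem s heU)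
  have hSdne : Sd.Nonempty := ⟨L ⟨-(s • e), hseU⟩, ⟨-(s • e), hseU⟩, hdown, rfl⟩
  have hSune : Su.Nonempty := ⟨L ⟨r • e, hreU⟩, ⟨r • e, hreU⟩, hup, rfl⟩
  have hSdbdd : BddAbove Sd := by
    refine ⟨L ⟨r • e, hreU⟩, ?_⟩
    rintro x ⟨v, hv, rfl⟩
    exact hmono _ _ (htrans _ _ _ hv hup)
  have hSubdd : BddBelow Su := by
    refine ⟨L ⟨-(s • e), hseU⟩, ?_⟩
    rintro x ⟨v, hv, rfl⟩
    exact hmono _ _ (htrans _ _ _ hdown hv)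
  -- build the extension via LinearPMap
  set f : V →ₗ.[ℝ] ℝ := ⟨U, L⟩ with hf
  have hpf : p ∉ f.domain := hp
  set g := f.supSpanSingleton p γ hpf with hg
  have hdom : Submodule.span ℝ (insert p (U : Set V)) = g.domain := by
    rw [LinearPMap.domain_supSpanSingleton, Submodule.span_insert, Submodule.span_eq,
      sup_comm]
  set W := Submodule.span ℝ (insert p (U : Set V)) with hW
  refine ⟨g.toFun.comp (LinearEquiv.ofEq W g.domain hdom).toLinearMap, ?_, ?_, ?_⟩
  · -- positivity
    intro w hw
    have hwmem : (w : V) ∈ g.domain := hdom ▸ w.2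
    rw [LinearPMap.domain_supSpanSingleton] at hwmem
    obtain ⟨u, hu, z, hz, hwz⟩ := Submodule.mem_sup.1 hwmem
    obtain ⟨b, rfl⟩ := Submodule.mem_span_singleton.1 hz
    have happ : g.toFun.comp (LinearEquiv.ofEq W g.domain hdom).toLinearMap w
        = L ⟨u, hu⟩ + b * γ := by
      have : (LinearEquiv.ofEq W g.domain hdom) w
          = ⟨u + b • p, Submodule.mem_sup.2 ⟨u, hu, _,
              Submodule.mem_span_singleton.2 ⟨b, rfl⟩, rfl⟩⟩ := by
        ext
        simp [← hwz]
      show g _ = _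
      erw [this]
      rw [LinearPMap.supSpanSingleton_apply_mk]
      rfl
    rw [happ]
    rw [← hwz] at hw
    rcases lt_trichotomy b 0 with hb | hb | hb
    · -- b < 0 : p ≤ (-b)⁻¹ • u
      have hb' : (0:ℝ) < -b := by linarith
      have h1 : le 0 ((-b)⁻¹ • (u + b • p)) := by
        have := hsmul ((-b)⁻¹) (by positivity) _ _ hw
        simpa using this
      have h2 : le p ((-b)⁻¹ • u) := by
        have h3 : (-b)⁻¹ • (u + b • p) = (-b)⁻¹ • u - p := by
          rw [smul_add, smul_smul, show (-b)⁻¹ * b = -1 by rw [inv_neg, neg_mul, inv_mul_cancel₀ hb.ne]]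
          simp [sub_eq_add_neg]
        rw [h3] at h1
        have h4 := htrans' _ _ p h1
        have e1 : (0 : V) + p = p := by abel
        have e2 : (-b)⁻¹ • u - p + p = (-b)⁻¹ • u := by abel
        rwa [e1, e2] at h4
      have hmem : L ⟨(-b)⁻¹ • u, U.smul_mem _ hu⟩ ∈ Su := ⟨_, h2, rfl⟩
      have := hγ₂.trans (csInf_le hSubdd hmem)
      have hLs : L ⟨(-b)⁻¹ • u, U.smul_mem _ hu⟩ = (-b)⁻¹ * L ⟨u, hu⟩ := by
        have : ((-b)⁻¹ • (⟨u, hu⟩ : U)) = (⟨(-b)⁻¹ • u, U.smul_mem _ hu⟩ : U) := rfl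
        rw [← this, map_smul]; rfl
      rw [hLs] at this
      have h5 := (le_inv_mul_iff₀ hb').1 this
      nlinarith
    · simp only [hb, zero_mul, add_zero]
      exact hL ⟨u, hu⟩ (by simpa [hb] using hw)
    · -- b > 0 : (-b⁻¹) • u ≤ p
      have h1 : le 0 (b⁻¹ • (u + b • p)) := by
        have := hsmul (b⁻¹) (by positivity) _ _ hw
        simpa using this
      have h2 : le (-(b⁻¹ • u)) p := by
        have h3 : b⁻¹ • (u + b • p) = b⁻¹ • u + p := by
          rw [smul_add, smul_smul, inv_mul_cancel₀ (ne_of_gt hb), one_smul]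
        rw [h3] at h1
        have h4 := htrans' _ _ (-(b⁻¹ • u)) h1
        have e1 : (0 : V) + -(b⁻¹ • u) = -(b⁻¹ • u) := by abel
        have e2 : b⁻¹ • u + p + -(b⁻¹ • u) = p := by abel
        rwa [e1, e2] at h4
      have hmem : L ⟨-(b⁻¹ • u), U.neg_mem (U.smul_mem _ hu)⟩ ∈ Sd := ⟨_, h2, rfl⟩
      have := (le_csSup hSdbdd hmem).trans hγ₁
      have hLs : L ⟨-(b⁻¹ • u), U.neg_mem (U.smul_mem _ hu)⟩ = -(b⁻¹ * L ⟨u, hu⟩) := by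
        have : (⟨-(b⁻¹ • u), U.neg_mem (U.smul_mem _ hu)⟩ : U)
            = -(b⁻¹ • (⟨u, hu⟩ : U)) := rfl
        rw [this, map_neg, map_smul]; rfl
      rw [hLs] at this
      have h5 : b⁻¹ * (-(L ⟨u, hu⟩)) ≤ γ := by rw [mul_neg]; linarith
      have h6 := (inv_mul_le_iff₀ hb).1 h5
      nlinarith
  · -- extends L
    intro u
    have : (LinearEquiv.ofEq W g.domain hdom)
        ⟨(u : V), Submodule.subset_span (Set.mem_insert_of_mem p u.2)⟩
        = ⟨(u : V) + (0:ℝ) • p, Submodule.mem_sup.2 ⟨u, u.2, _,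
            Submodule.mem_span_singleton.2 ⟨0, rfl⟩, rfl⟩⟩ := by
      ext; simp
    show g _ = _
    erw [this]
    rw [LinearPMap.supSpanSingleton_apply_mk (hx' := u.2)]
    simp
    rfl
  · -- value at p
    have : (LinearEquiv.ofEq W g.domain hdom)
        ⟨p, Submodule.subset_span (Set.mem_insert p (U : Set V))⟩
        = ⟨(0 : V) + (1:ℝ) • p, Submodule.mem_sup.2 ⟨0, U.zero_mem, _,
            Submodule.mem_span_singleton.2 ⟨1, rfl⟩, rfl⟩⟩ := by
      ext; simp
    show g _ = _
    erw [this]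
    rw [LinearPMap.supSpanSingleton_apply_mk (hx' := U.zero_mem)]
    have : f ⟨0, U.zero_mem⟩ = L 0 := rfl
    rw [this, map_zero L]
    simp
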